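/- Let n ≥ 1, let K, L ⊂ ℝⁿ be convex bodies containing the origin in their interiors, let φ : [0,∞) → [0,∞) be an increasing, non-constant, convex function, and let μ be the (finite) measure on ℝⁿ with density x ↦ exp(−φ(‖x‖_L)) with respect to Lebesgue measure. Then limsup_{t→∞} ln μ(ℝⁿ \ tK) / φ(r(K,L)·t) = −1. -/

import Mathlib

open MeasureTheory Filter Set Pointwise Topology

lemma phi_lin {φ : ℝ → ℝ} (hmono : MonotoneOn φ (Ici 0))
    (hconv : ConvexOn ℝ (Ici 0) φ)
    (hnonneg : ∀ x ∈ Ici (0:ℝ), 0 ≤ φ x)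
    (hnc : ∃ a ∈ Ici (0:ℝ), ∃ b ∈ Ici (0:ℝ), φ a ≠ φ b) :
    ∃ a : ℝ, 0 < a ∧ ∃ s₁ : ℝ, 1 ≤ s₁ ∧
      (∀ u : ℝ, 0 ≤ u → a * u - a * s₁ ≤ φ u) ∧
      (∀ s k : ℝ, s₁ ≤ s → 0 ≤ k → φ s + a * k ≤ φ (s + k)) := by
  obtain ⟨p, hp, q, hq, hpq⟩ := hnc
  have key : ∃ s₀ : ℝ, 0 < s₀ ∧ φ 0 < φ s₀ := by
    rcases lt_trichotomy p q with h | h | h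
    · have h1 : φ p < φ q := lt_of_le_of_ne (hmono hp hq h.le) hpq
      exact ⟨q, lt_of_le_of_lt hp h, lt_of_le_of_lt (hmono self_mem_Ici hp hp) h1⟩
    · exact absurd (by rw [h]) hpq
    · have h1 : φ q < φ p := lt_of_le_of_ne (hmono hq hp h.le) (Ne.symm hpq)
      exact ⟨p, lt_of_le_of_lt hq h, lt_of_le_of_lt (hmono self_mem_Ici hq hq) h1⟩
  obtain ⟨s₀, hs₀pos, hs₀⟩ := key
  set s₁ := max s₀ 1 with hs₁def
  have hs₁pos : 0 < s₁ := lt_of_lt_of_le hs₀pos (le_max_left _ _)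
  have hs₁mem : s₁ ∈ Ici (0:ℝ) := hs₁pos.le
  have hφs₁ : φ 0 < φ s₁ := lt_of_lt_of_le hs₀ (hmono hs₀pos.le hs₁mem (le_max_left _ _))
  set a := (φ s₁ - φ 0) / s₁ with ha_def
  have ha : 0 < a := div_pos (by linarith) hs₁pos
  have h0 : 0 ≤ φ 0 := hnonneg 0 self_mem_Ici
  refine ⟨a, ha, s₁, le_max_right _ _, ?_, ?_⟩
  · intro u hu
    rcases le_or_gt u s₁ with h | h
    · have h0u : 0 ≤ φ u := hnonneg u hu
      nlinarith [mul_le_mul_of_nonneg_left h ha.le]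
    · have hupos : 0 < u := lt_trans hs₁pos h
      have hsec := hconv.secant_mono (a := 0) (x := s₁) (y := u) self_mem_Ici hs₁mem
        hupos.le hs₁pos.ne' hupos.ne' h.le
      simp only [sub_zero] at hsec
      have h3 : a * u ≤ φ u - φ 0 := by
        rw [ha_def]
        calc (φ s₁ - φ 0) / s₁ * u ≤ (φ u - φ 0) / u * u :=
              mul_le_mul_of_nonneg_right hsec hupos.le
          _ = φ u - φ 0 := div_mul_cancel₀ _ hupos.ne'
      nlinarith [mul_nonneg ha.le hs₁pos.le]
  · intro s k hs hk
    rcases eq_or_lt_of_le hk with rfl | hk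
    · simp
    have hspos : 0 < s := lt_of_lt_of_le hs₁pos hs
    have hsk : (0:ℝ) ≤ s + k := by linarith
    have h1 : a ≤ (φ s - φ 0) / s := by
      have := hconv.secant_mono (a := 0) (x := s₁) (y := s) self_mem_Ici hs₁mem hspos.le
        hs₁pos.ne' hspos.ne' hs
      simpa using this
    have h2 : (φ 0 - φ s) / (0 - s) ≤ (φ (s+k) - φ s) / (s + k - s) :=
      hconv.secant_mono (a := s) (x := 0) (y := s+k) hspos.le self_mem_Ici hsk
        hspos.ne (by linarith) (by linarith)
    have heq : (φ 0 - φ s) / (0 - s) = (φ s - φ 0) / s := by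
      rw [zero_sub, div_neg, ← neg_div, neg_sub]
    rw [heq] at h2
    have h2' : (φ s - φ 0) / s ≤ (φ (s+k) - φ s) / k := by
      have : s + k - s = k := by ring
      rwa [this] at h2
    have h3 : a ≤ (φ (s+k) - φ s) / k := le_trans h1 h2'
    have := (le_div_iff₀ hk).1 h3
    linarith

lemma good_pts {φ : ℝ → ℝ} (hmono : MonotoneOn φ (Ici 0))
    {a s₁ : ℝ} (ha : 0 < a) (hs₁ : 1 ≤ s₁)
    (hlin : ∀ u : ℝ, 0 ≤ u → a * u - a * s₁ ≤ φ u)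
    {β ε : ℝ} (hβ : 0 < β) (hε : 0 < ε) (T : ℝ) :
    ∃ s : ℝ, T ≤ s ∧ s₁ ≤ s ∧ φ (s + β * Real.exp (-(ε * φ s))) ≤ (1 + ε) * φ s := by
  by_contra hcon
  push_neg at hcon
  set s0 := max (max T s₁) (s₁ + (1/ε + 1)/a) with hs0def
  have hs0s₁ : s₁ ≤ s0 := le_trans (le_max_right T s₁) (le_max_left _ _)
  have hs0T : T ≤ s0 := le_trans (le_max_left T s₁) (le_max_left _ _)
  have hs0nn : 0 ≤ s0 := le_trans (by linarith) hs0s₁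
  have hφs0 : 1/ε + 1 ≤ φ s0 := by
    have h1 : s₁ + (1/ε + 1)/a ≤ s0 := le_max_right _ _
    have := hlin s0 hs0nn
    have h2 : a * ((1/ε + 1)/a) = 1/ε + 1 := mul_div_cancel₀ _ ha.ne'
    nlinarith [mul_le_mul_of_nonneg_left h1 ha.le]
  have hφs0pos : 0 < φ s0 := lt_of_lt_of_le (by positivity) hφs0
  have hεφ : 1 ≤ ε * φ s0 := by
    have h := mul_le_mul_of_nonneg_left hφs0 hε.le
    have h' : ε * (1/ε + 1) = 1 + ε := by field_simp
    nlinarith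
  set q := Real.exp (-ε) with hq
  have hq1 : q < 1 := Real.exp_lt_one_iff.2 (by linarith)
  have hqpos : 0 < q := Real.exp_pos _
  set D := β * Real.exp (-1) / (1 - q) with hD
  have hDpos : 0 < D := by
    apply div_pos (by positivity) (by linarith)
  set u : ℕ → ℝ := fun k => Nat.recAux s0 (fun _ uk => uk + β * Real.exp (-(ε * φ uk))) k
    with hu
  have hustep : ∀ k, u (k+1) = u k + β * Real.exp (-(ε * φ (u k))) := fun k => rfl
  have key : ∀ k : ℕ, s0 ≤ u k ∧ (1+ε)^k * φ s0 ≤ φ (u k) ∧ u k ≤ s0 + D * (1 - q^k) := by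
    intro k
    induction k with
    | zero => simp [hu]
    | succ k ih =>
      obtain ⟨ih1, ih2, ih3⟩ := ih
      have huknn : 0 ≤ u k := le_trans hs0nn ih1
      have hstep := hcon (u k) (le_trans hs0T ih1) (le_trans hs0s₁ ih1)
      refine ⟨?_, ?_, ?_⟩
      · rw [hustep]; nlinarith [Real.exp_pos (-(ε * φ (u k)))]
      · have h4 : (1+ε) * φ (u k) < φ (u (k+1)) := by rw [hustep]; exact hstep
        calc (1+ε)^(k+1) * φ s0 = (1+ε) * ((1+ε)^k * φ s0) := by ring
          _ ≤ (1+ε) * φ (u k) := by nlinarith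
          _ ≤ φ (u (k+1)) := h4.le
      · have hbnd : β * Real.exp (-(ε * φ (u k))) ≤ D * (1 - q) * q ^ k := by
          have h5 : (1:ℝ) + k * ε ≤ ε * φ (u k) := by
            have h6 : (1+ε)^k * 1 ≤ (1+ε)^k * (ε * φ s0) :=
              mul_le_mul_of_nonneg_left hεφ (by positivity)
            have h7 : 1 + (k:ℝ) * ε ≤ (1+ε)^k := by
              have := one_add_mul_le_pow (a := ε) (by linarith) k
              linarith
            nlinarith [pow_pos (show (0:ℝ) < 1 + ε by linarith) k]
          have h8 : Real.exp (-(ε * φ (u k))) ≤ Real.exp (-(1 + k * ε)) :=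
            Real.exp_le_exp.2 (by linarith)
          have h9 : Real.exp (-(1 + (k:ℝ) * ε)) = Real.exp (-1) * q ^ k := by
            rw [hq, ← Real.exp_nat_mul]
            rw [← Real.exp_add]
            ring_nf
          have hDq : D * (1 - q) = β * Real.exp (-1) := by
            rw [hD]; exact div_mul_cancel₀ _ (by linarith : (1:ℝ) - q ≠ 0)
          rw [hDq]
          calc β * Real.exp (-(ε * φ (u k))) ≤ β * Real.exp (-(1 + (k:ℝ) * ε)) :=
                mul_le_mul_of_nonneg_left h8 hβ.le
            _ = β * (Real.exp (-1) * q ^ k) := by rw [h9]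
            _ = β * Real.exp (-1) * q ^ k := by ring
        rw [hustep]
        have : D * (1 - q^k) + D * (1-q) * q^k = D * (1 - q^(k+1)) := by ring
        linarith
  obtain ⟨k, hk⟩ := pow_unbounded_of_one_lt (φ (s0 + D) / φ s0) (show (1:ℝ) < 1 + ε by linarith)
  obtain ⟨h1, h2, h3⟩ := key k
  have hukD : u k ≤ s0 + D := by
    nlinarith [pow_nonneg hqpos.le k, pow_le_one₀ hqpos.le hq1.le (n := k)]
  have : φ (u k) ≤ φ (s0 + D) :=
    hmono (le_trans hs0nn h1) (by linarith : (0:ℝ) ≤ s0 + D) hukD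
  have hlt : φ (s0 + D) < (1+ε)^k * φ s0 := by
    rw [div_lt_iff₀ hφs0pos] at hk
    linarith
  linarith

lemma real_le_of_forall_pos_le_add {x y : ℝ} (h : ∀ ε : ℝ, 0 < ε → x ≤ y + ε) : x ≤ y := by
  by_contra h'
  push_neg at h'
  have := h ((x - y)/2) (by linarith)
  linarith

lemma limsup_eq_neg_one_of {F : ℝ → ℝ}
    (hupper : ∀ ε : ℝ, 0 < ε → ∀ᶠ t : ℝ in Filter.atTop, F t ≤ -1 + ε)
    (hfreq : ∀ ε : ℝ, 0 < ε → ∃ᶠ t : ℝ in Filter.atTop, -1 - ε ≤ F t) :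
    Filter.limsup F Filter.atTop = -1 := by
  have hbdd : IsBoundedUnder (· ≤ ·) atTop F :=
    isBoundedUnder_of_eventually_le ((hupper 1 one_pos).mono fun t ht => ht)
  have hcb : IsCoboundedUnder (· ≤ ·) atTop F :=
    IsCoboundedUnder.of_frequently_ge (hfreq 1 one_pos)
  apply le_antisymm
  · apply real_le_of_forall_pos_le_add
    intro ε hε
    have := limsup_le_of_le hcb (hupper ε hε)
    linarith
  · by_contra h'
    push_neg at h'
    have hεpos : 0 < (-1 - limsup F atTop)/2 := by linarith
    have h9 := le_limsup_of_frequently_le (hfreq _ hεpos) hbdd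
    linarith

/-- The `L`-inradius `r(K, L) = sup{R > 0 : R·L ⊆ K}`. -/
noncomputable def inradiusOf {n : ℕ}
    (K L : Set (EuclideanSpace ℝ (Fin n))) : ℝ :=
  sSup {R : ℝ | 0 < R ∧ R • L ⊆ K}

set_option maxHeartbeats 1000000 in
theorem stmt_9 {n : ℕ} (hn : 1 ≤ n)
    (K L : Set (EuclideanSpace ℝ (Fin n)))
    (hKcomp : IsCompact K) (hKconv : Convex ℝ K)
    (hK0 : (0 : EuclideanSpace ℝ (Fin n)) ∈ interior K)
    (hLcomp : IsCompact L) (hLconv : Convex ℝ L)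
    (hL0 : (0 : EuclideanSpace ℝ (Fin n)) ∈ interior L)
    (φ : ℝ → ℝ)
    (hφmono : MonotoneOn φ (Ici 0))
    (hφconv : ConvexOn ℝ (Ici 0) φ)
    (hφnonneg : ∀ x ∈ Ici (0:ℝ), 0 ≤ φ x)
    (hφnonconst : ∃ a ∈ Ici (0:ℝ), ∃ b ∈ Ici (0:ℝ), φ a ≠ φ b)
    (μ : Measure (EuclideanSpace ℝ (Fin n)))
    (hμ : μ = MeasureTheory.volume.withDensity
      (fun x => ENNReal.ofReal (Real.exp (-φ (gauge L x))))) :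
    limsup (fun t : ℝ =>
        Real.log (μ ((t • K)ᶜ)).toReal / φ (inradiusOf K L * t)) atTop = -1 := by
  have hnpos : (0:ℝ) < n := by exact_mod_cast hn
  obtain ⟨a, ha, s₁, hs₁, hlin, hshift⟩ := phi_lin hφmono hφconv hφnonneg hφnonconst
  -- basic geometry
  have hKnhds : K ∈ 𝓝 (0 : EuclideanSpace ℝ (Fin n)) := mem_interior_iff_mem_nhds.1 hK0
  have hLnhds : L ∈ 𝓝 (0 : EuclideanSpace ℝ (Fin n)) := mem_interior_iff_mem_nhds.1 hL0
  obtain ⟨ρK, hρK, hballK⟩ := Metric.mem_nhds_iff.1 hKnhds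
  obtain ⟨ρL, hρL, hballL⟩ := Metric.mem_nhds_iff.1 hLnhds
  obtain ⟨RL, hRL, hLsub⟩ := hLcomp.isBounded.subset_ball_lt 0 0
  obtain ⟨RK, hRK, hKsub⟩ := hKcomp.isBounded.subset_ball_lt 0 0
  have habsK : Absorbent ℝ K := absorbent_nhds_zero hKnhds
  have habsL : Absorbent ℝ L := absorbent_nhds_zero hLnhds
  have hgKcont : Continuous (gauge K) := continuous_gauge hKconv hKnhds
  have hgLcont : Continuous (gauge L) := continuous_gauge hLconv hLnhds
  set C : ℝ := max ρK⁻¹ ρL⁻¹ with hC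
  have hCpos : 0 < C := lt_of_lt_of_le (inv_pos.2 hρK) (le_max_left _ _)
  have hCK : ∀ x : EuclideanSpace ℝ (Fin n), gauge K x ≤ C * ‖x‖ := by
    intro x
    have h1 : gauge K x ≤ gauge (Metric.ball (0:EuclideanSpace ℝ (Fin n)) ρK) x :=
      gauge_mono (absorbent_ball_zero hρK) hballK x
    rw [gauge_ball hρK.le] at h1
    calc gauge K x ≤ ‖x‖ / ρK := h1
      _ = ρK⁻¹ * ‖x‖ := by rw [div_eq_inv_mul]
      _ ≤ C * ‖x‖ := mul_le_mul_of_nonneg_right (le_max_left _ _) (norm_nonneg x)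
  have hCL : ∀ x : EuclideanSpace ℝ (Fin n), gauge L x ≤ C * ‖x‖ := by
    intro x
    have h1 : gauge L x ≤ gauge (Metric.ball (0:EuclideanSpace ℝ (Fin n)) ρL) x :=
      gauge_mono (absorbent_ball_zero hρL) hballL x
    rw [gauge_ball hρL.le] at h1
    calc gauge L x ≤ ‖x‖ / ρL := h1
      _ = ρL⁻¹ * ‖x‖ := by rw [div_eq_inv_mul]
      _ ≤ C * ‖x‖ := mul_le_mul_of_nonneg_right (le_max_right _ _) (norm_nonneg x)
  -- inradius facts
  set Sr : Set ℝ := {R : ℝ | 0 < R ∧ R • L ⊆ K} with hSrdef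
  have hSrne : (ρK / RL) ∈ Sr := by
    constructor
    · positivity
    · rintro z ⟨y, hy, rfl⟩
      apply hballK
      have hyR : ‖y‖ < RL := by simpa [Metric.mem_ball] using hLsub hy
      simp only [Metric.mem_ball, dist_zero_right]
      rw [norm_smul, Real.norm_eq_abs]
      calc |ρK / RL| * ‖y‖ = ρK / RL * ‖y‖ := by rw [abs_of_pos (by positivity)]
        _ < ρK / RL * RL := by
            apply mul_lt_mul_of_pos_left hyR (by positivity)
        _ = ρK := by field_simp
  have hSrbdd : BddAbove Sr := by
    refine ⟨2 * RK / ρL, ?_⟩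
    rintro R ⟨hRpos, hRLK⟩
    have : ∃ e : EuclideanSpace ℝ (Fin n), ‖e‖ = 1 := by
      refine ⟨EuclideanSpace.single ⟨0, hn⟩ (1:ℝ), ?_⟩
      rw [EuclideanSpace.norm_single]; norm_num
    obtain ⟨e, he⟩ := this
    have hy : (ρL/2) • e ∈ L := by
      apply hballL
      simp only [Metric.mem_ball, dist_zero_right, norm_smul, he, mul_one, Real.norm_eq_abs]
      rw [abs_of_pos (by positivity)]; linarith
    have hRy : R • (ρL/2) • e ∈ K := hRLK ⟨_, hy, rfl⟩
    have := hKsub hRy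
    simp only [Metric.mem_ball, dist_zero_right, norm_smul, he, mul_one, Real.norm_eq_abs] at this
    rw [abs_of_pos hRpos, abs_of_pos (by positivity)] at this
    rw [le_div_iff₀ hρL]
    nlinarith
  set r : ℝ := inradiusOf K L with hrdef
  have hrSup : r = sSup Sr := rfl
  have hrpos : 0 < r := lt_of_lt_of_le (by positivity) (le_csSup hSrbdd hSrne)
  have hrLK : r • L ⊆ K := by
    rintro z ⟨y, hy, rfl⟩
    have hclosed : IsClosed K := hKcomp.isClosed
    rw [← hclosed.closure_eq, Metric.mem_closure_iff]
    intro ε hε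
    set δ := ε / (‖y‖ + 1) with hδ
    have hδpos : 0 < δ := by positivity
    obtain ⟨R, hRmem, hRgt⟩ := exists_lt_of_lt_csSup ⟨_, hSrne⟩
      (show r - δ < sSup Sr by rw [← hrSup]; linarith)
    have hRle : R ≤ r := le_csSup hSrbdd hRmem
    refine ⟨R • y, hRmem.2 ⟨y, hy, rfl⟩, ?_⟩
    rw [dist_eq_norm, ← sub_smul, norm_smul, Real.norm_eq_abs]
    have h1 : |r - R| ≤ δ := by rw [abs_of_nonneg (by linarith)]; linarith
    calc |r - R| * ‖y‖ ≤ δ * ‖y‖ := mul_le_mul_of_nonneg_right h1 (norm_nonneg _)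
      _ < ε := by
          rw [hδ, div_mul_eq_mul_div, div_lt_iff₀ (by positivity)]
          nlinarith [norm_nonneg y]
  have hcontact : ∃ x₀ : EuclideanSpace ℝ (Fin n), gauge L x₀ ≤ r ∧ 1 ≤ gauge K x₀ := by
    have hnotin : ∀ m : ℕ, ∃ y, y ∈ (r + 1/(m+1)) • L ∧ y ∉ K := by
      intro m
      by_contra hcon
      push_neg at hcon
      have hmem : (r + 1/(m+1)) ∈ Sr := ⟨by positivity, fun z hz => hcon z hz⟩
      have h2 := le_csSup hSrbdd hmem
      rw [← hrSup] at h2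
      have : (0:ℝ) < 1/(m+1) := by positivity
      linarith
    choose y hy hynK using hnotin
    have hybdd : ∀ m, y m ∈ Metric.closedBall (0:EuclideanSpace ℝ (Fin n)) ((r+1) * RL) := by
      intro m
      obtain ⟨z, hz, hzy⟩ := hy m
      have hz' : ‖z‖ < RL := by simpa [Metric.mem_ball] using hLsub hz
      have h1 : (1:ℝ)/(m+1) ≤ 1 := by
        rw [div_le_one (by positivity)]; linarith [Nat.cast_nonneg (α := ℝ) m]
      simp only [Metric.mem_closedBall, dist_zero_right, ← hzy, norm_smul, Real.norm_eq_abs]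
      rw [abs_of_pos (by positivity)]
      nlinarith [norm_nonneg z]
    obtain ⟨x₀, hx₀mem, ψ, hψ, hψtend⟩ :=
      (isCompact_closedBall (0:EuclideanSpace ℝ (Fin n)) ((r+1)*RL)).tendsto_subseq hybdd
    refine ⟨x₀, ?_, ?_⟩
    · have h1 : ∀ m, gauge L (y (ψ m)) ≤ r + 1/(m+1) := by
        intro m
        have h2 : gauge L (y (ψ m)) ≤ r + 1/(ψ m + 1) :=
          gauge_le_of_mem (by positivity) (hy (ψ m))
        have h3 : (1:ℝ)/(ψ m + 1) ≤ 1/(m+1) := by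
          apply one_div_le_one_div_of_le (by positivity)
          have h4 : m ≤ ψ m := hψ.le_apply
          have : (m:ℝ) ≤ (ψ m : ℝ) := Nat.cast_le.2 h4
          linarith
        linarith
      refine le_of_tendsto_of_tendsto' (hgLcont.continuousAt.tendsto.comp hψtend) ?_ h1
      have : Tendsto (fun m : ℕ => r + 1/(m+1 : ℝ)) atTop (𝓝 (r + 0)) :=
        tendsto_const_nhds.add tendsto_one_div_add_atTop_nhds_zero_nat
      simpa using this
    · have h1 : ∀ m, 1 ≤ gauge K (y (ψ m)) := by
        intro m
        by_contra hlt
        push_neg at hlt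
        exact hynK (ψ m) (interior_subset ((gauge_lt_one_iff_mem_interior hKconv hKnhds).1 hlt))
      exact ge_of_tendsto' (hgKcont.continuousAt.tendsto.comp hψtend) h1
  -- membership lemmas
  have memL : ∀ (c : ℝ), 0 < c → ∀ x : EuclideanSpace ℝ (Fin n), gauge L x < c → x ∈ c • L := by
    intro c hc x hx
    have h1 : gauge L (c⁻¹ • x) < 1 := by
      rw [gauge_smul_of_nonneg (inv_nonneg.2 hc.le), smul_eq_mul, ← div_eq_inv_mul,
        div_lt_one hc]
      exact hx
    have h2 : c⁻¹ • x ∈ L := gauge_lt_one_subset_self hLconv (mem_of_mem_nhds hLnhds) habsL h1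
    exact ⟨c⁻¹ • x, h2, by show c • (c⁻¹ • x) = x; rw [smul_inv_smul₀ hc.ne']⟩
  have memtK : ∀ (t : ℝ), 0 ≤ t → ∀ x ∈ t • K, gauge K x ≤ t := by
    rintro t ht x ⟨k, hk, rfl⟩
    rw [gauge_smul_of_nonneg ht, smul_eq_mul]
    calc t * gauge K k ≤ t * 1 := mul_le_mul_of_nonneg_left (gauge_le_one_of_mem hk) ht
      _ = t := mul_one t
  -- volume constants
  have hvolLfin : volume L ≠ ⊤ := hLcomp.measure_lt_top.ne
  set vb : ℝ := (volume (Metric.ball (0:EuclideanSpace ℝ (Fin n)) 1)).toReal with hvbdef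
  have hvbpos : 0 < vb :=
    ENNReal.toReal_pos (Metric.measure_ball_pos volume 0 one_pos).ne' measure_ball_lt_top.ne
  subst hμ
  -- geometric series constants
  set q : ℝ := Real.exp (-(a/2)) with hqdef
  have hq0 : 0 < q := Real.exp_pos _
  have hq1 : q < 1 := Real.exp_lt_one_iff.2 (by linarith)
  set C₁ : ℝ := (2*n/a)^n * Real.exp (a/2) with hC₁def
  have hC₁pos : 0 < C₁ := by positivity
  set CT : ℝ := (volume L).toReal * C₁ * (1-q)⁻¹ + 1 with hCTdef
  have hCT1 : 1 ≤ CT := by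
    have h1 : (0:ℝ) ≤ (volume L).toReal * C₁ * (1-q)⁻¹ :=
      mul_nonneg (mul_nonneg ENNReal.toReal_nonneg hC₁pos.le)
        (inv_nonneg.2 (by linarith))
    rw [hCTdef]
    linarith
  have hCTpos : 0 < CT := lt_of_lt_of_le one_pos hCT1
  -- per-term estimate
  have key_term : ∀ (s : ℝ) (k : ℕ), s₁ ≤ s →
      Real.exp (-φ (s+k)) * (s+k+1)^n ≤ (Real.exp (-φ s) * (s+1)^n * C₁) * q^k := by
    intro s k hs
    have hs0 : (0:ℝ) ≤ s := le_trans (by linarith) hs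
    have hkc : (0:ℝ) ≤ (k:ℝ) := Nat.cast_nonneg k
    have h1 : φ s + a * k ≤ φ (s + k) := hshift s k hs hkc
    have h2 : Real.exp (-φ (s+k)) ≤ Real.exp (-φ s) * Real.exp (-(a*k)) := by
      rw [← Real.exp_add]; exact Real.exp_le_exp.2 (by linarith)
    have h3 : (s+(k:ℝ)+1)^n ≤ (s+1)^n * ((k:ℝ)+1)^n := by
      have e1 : s+(k:ℝ)+1 ≤ (s+1)*((k:ℝ)+1) := by nlinarith
      calc (s+(k:ℝ)+1)^n ≤ ((s+1)*((k:ℝ)+1))^n := pow_le_pow_left₀ (by positivity) e1 n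
        _ = (s+1)^n * ((k:ℝ)+1)^n := mul_pow _ _ _
    have h5 : (k:ℝ)+1 ≤ (2*n/a) * Real.exp (a*((k:ℝ)+1)/(2*n)) := by
      have h6 : a*((k:ℝ)+1)/(2*n) ≤ Real.exp (a*((k:ℝ)+1)/(2*n)) := by
        have := Real.add_one_le_exp (a*((k:ℝ)+1)/(2*n))
        linarith
      have h7 := mul_le_mul_of_nonneg_left h6 (show (0:ℝ) ≤ 2*n/a by positivity)
      have h8 : 2*n/a * (a*((k:ℝ)+1)/(2*n)) = (k:ℝ)+1 := by field_simp
      linarith [h8 ▸ h7]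
    have h4 : ((k:ℝ)+1)^n ≤ (2*n/a)^n * Real.exp (a*((k:ℝ)+1)/2) := by
      calc ((k:ℝ)+1)^n ≤ ((2*n/a) * Real.exp (a*((k:ℝ)+1)/(2*n)))^n :=
            pow_le_pow_left₀ (by positivity) h5 n
        _ = (2*n/a)^n * Real.exp (a*((k:ℝ)+1)/(2*n))^n := mul_pow _ _ _
        _ = (2*n/a)^n * Real.exp (a*((k:ℝ)+1)/2) := by
            rw [← Real.exp_nat_mul]
            congr 1
            field_simp
    have h7 : Real.exp (-(a*k)) * Real.exp (a*((k:ℝ)+1)/2) = Real.exp (a/2) * q^k := by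
      rw [hqdef, ← Real.exp_nat_mul, ← Real.exp_add, ← Real.exp_add]
      congr 1
      ring
    have hpos1 : (0:ℝ) ≤ Real.exp (-φ s) := (Real.exp_pos _).le
    have hpos2 : (0:ℝ) ≤ (s+1)^n := by positivity
    calc Real.exp (-φ (s+k)) * (s+(k:ℝ)+1)^n
        ≤ (Real.exp (-φ s) * Real.exp (-(a*k))) * ((s+1)^n * ((k:ℝ)+1)^n) := by
          apply mul_le_mul h2 h3 (by positivity) (by positivity)
      _ = (Real.exp (-φ s) * (s+1)^n) * (Real.exp (-(a*k)) * ((k:ℝ)+1)^n) := by ring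
      _ ≤ (Real.exp (-φ s) * (s+1)^n) *
            (Real.exp (-(a*k)) * ((2*n/a)^n * Real.exp (a*((k:ℝ)+1)/2))) := by
          apply mul_le_mul_of_nonneg_left _ (by positivity)
          apply mul_le_mul_of_nonneg_left h4 (Real.exp_pos _).le
      _ = (Real.exp (-φ s) * (s+1)^n) *
            ((2*n/a)^n * (Real.exp (-(a*k)) * Real.exp (a*((k:ℝ)+1)/2))) := by ring
      _ = (Real.exp (-φ s) * (s+1)^n * C₁) * q^k := by rw [h7, hC₁def]; ring
  -- the upper bound for the measure of gauge superlevel sets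
  set μ' := volume.withDensity
      (fun x : EuclideanSpace ℝ (Fin n) => ENNReal.ofReal (Real.exp (-φ (gauge L x)))) with hμ'def
  have hUB : ∀ s : ℝ, s₁ ≤ s →
      μ' {x : EuclideanSpace ℝ (Fin n) | s ≤ gauge L x}
        ≤ ENNReal.ofReal (Real.exp (-φ s) * (s+1)^n * CT) := by
    intro s hs
    have hs0 : (0:ℝ) < s := lt_of_lt_of_le one_pos (le_trans hs₁ hs)
    set shell : ℕ → Set (EuclideanSpace ℝ (Fin n)) :=
      fun k => {x | s + k ≤ gauge L x} ∩ {x | gauge L x < s + k + 1} with hshelldef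
    have hmeas : ∀ k, MeasurableSet (shell k) := by
      intro k
      exact (measurableSet_le measurable_const hgLcont.measurable).inter
        (measurableSet_lt hgLcont.measurable measurable_const)
    have hcover : {x : EuclideanSpace ℝ (Fin n) | s ≤ gauge L x} ⊆ ⋃ k, shell k := by
      intro x hx
      simp only [mem_iUnion]
      have hxs : s ≤ gauge L x := hx
      have h9 := Nat.floor_le (sub_nonneg.2 hxs)
      have h10 := Nat.lt_floor_add_one (gauge L x - s)
      exact ⟨⌊gauge L x - s⌋₊, Set.mem_inter
        (by simp only [mem_setOf_eq]; linarith)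
        (by simp only [mem_setOf_eq]; linarith)⟩
    have hμshell : ∀ k : ℕ, μ' (shell k) ≤
        ENNReal.ofReal (Real.exp (-φ s) * (s+1)^n * C₁ * (volume L).toReal) *
          (ENNReal.ofReal q)^k := by
      intro k
      have hsk0 : (0:ℝ) ≤ s + k := by positivity
      have h1 : μ' (shell k) = ∫⁻ x in shell k,
          ENNReal.ofReal (Real.exp (-φ (gauge L x))) ∂volume := withDensity_apply _ (hmeas k)
      have h2 : μ' (shell k) ≤ ENNReal.ofReal (Real.exp (-φ (s+k))) * volume (shell k) := by
        rw [h1, ← setLIntegral_const]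
        apply setLIntegral_mono' (hmeas k)
        intro x hx
        apply ENNReal.ofReal_le_ofReal
        apply Real.exp_le_exp.2
        apply neg_le_neg
        exact hφmono hsk0 (gauge_nonneg x) hx.1
      have h4 : shell k ⊆ (s+k+1) • L := fun x hx => memL (s+k+1) (by positivity) x hx.2
      have h6 : volume ((s+(k:ℝ)+1) • L) = ENNReal.ofReal ((s+k+1)^n) * volume L := by
        rw [Measure.addHaar_smul_of_nonneg volume (by positivity) L, finrank_euclideanSpace_fin]
      have h7 : μ' (shell k) ≤
          ENNReal.ofReal (Real.exp (-φ (s+k)) * (s+k+1)^n) * volume L := by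
        calc μ' (shell k) ≤ ENNReal.ofReal (Real.exp (-φ (s+k))) * volume (shell k) := h2
          _ ≤ ENNReal.ofReal (Real.exp (-φ (s+k))) * volume ((s+(k:ℝ)+1) • L) := by
              apply mul_le_mul_right (measure_mono h4)
          _ = ENNReal.ofReal (Real.exp (-φ (s+k))) * (ENNReal.ofReal ((s+k+1)^n) * volume L) := by
              rw [h6]
          _ = ENNReal.ofReal (Real.exp (-φ (s+k)) * (s+k+1)^n) * volume L := by
              rw [ENNReal.ofReal_mul (Real.exp_pos (-φ (s+(k:ℝ)))).le, mul_assoc]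
      calc μ' (shell k) ≤ ENNReal.ofReal (Real.exp (-φ (s+k)) * (s+k+1)^n) * volume L := h7
        _ ≤ ENNReal.ofReal ((Real.exp (-φ s) * (s+1)^n * C₁) * q^k) * volume L := by
            apply mul_le_mul_left
            exact ENNReal.ofReal_le_ofReal (key_term s k hs)
        _ = ENNReal.ofReal ((Real.exp (-φ s) * (s+1)^n * C₁) * q^k) *
              ENNReal.ofReal ((volume L).toReal) := by rw [ENNReal.ofReal_toReal hvolLfin]
        _ = ENNReal.ofReal (Real.exp (-φ s) * (s+1)^n * C₁ * (volume L).toReal) *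
              (ENNReal.ofReal q)^k := by
            rw [← ENNReal.ofReal_mul (by positivity), ← ENNReal.ofReal_pow hq0.le,
              ← ENNReal.ofReal_mul (by positivity)]
            congr 1
            ring
    have hgeom : ∑' k : ℕ, (ENNReal.ofReal q)^k = (1 - ENNReal.ofReal q)⁻¹ :=
      ENNReal.tsum_geometric _
    calc μ' {x : EuclideanSpace ℝ (Fin n) | s ≤ gauge L x} ≤ μ' (⋃ k, shell k) :=
          measure_mono hcover
      _ ≤ ∑' k : ℕ, μ' (shell k) := measure_iUnion_le _
      _ ≤ ∑' k : ℕ, ENNReal.ofReal (Real.exp (-φ s) * (s+1)^n * C₁ * (volume L).toReal) *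
            (ENNReal.ofReal q)^k := ENNReal.tsum_le_tsum hμshell
      _ = ENNReal.ofReal (Real.exp (-φ s) * (s+1)^n * C₁ * (volume L).toReal) *
            (1 - ENNReal.ofReal q)⁻¹ := by rw [ENNReal.tsum_mul_left, hgeom]
      _ = ENNReal.ofReal (Real.exp (-φ s) * (s+1)^n * C₁ * (volume L).toReal) *
            ENNReal.ofReal ((1-q)⁻¹) := by
          rw [← ENNReal.ofReal_one, ← ENNReal.ofReal_sub _ hq0.le,
            ENNReal.ofReal_inv_of_pos (by linarith)]
      _ = ENNReal.ofReal (Real.exp (-φ s) * (s+1)^n * C₁ * (volume L).toReal * (1-q)⁻¹) := by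
          rw [← ENNReal.ofReal_mul (by positivity)]
      _ ≤ ENNReal.ofReal (Real.exp (-φ s) * (s+1)^n * CT) := by
          apply ENNReal.ofReal_le_ofReal
          have hfac : C₁ * (volume L).toReal * (1-q)⁻¹ ≤ CT := by
            rw [hCTdef]
            nlinarith [ENNReal.toReal_nonneg (a := volume L), hC₁pos,
              inv_nonneg.2 (show (0:ℝ) ≤ 1 - q by linarith)]
          calc Real.exp (-φ s) * (s+1)^n * C₁ * (volume L).toReal * (1-q)⁻¹
              = (Real.exp (-φ s) * (s+1)^n) * (C₁ * (volume L).toReal * (1-q)⁻¹) := by ring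
            _ ≤ (Real.exp (-φ s) * (s+1)^n) * CT := by
                apply mul_le_mul_of_nonneg_left hfac (by positivity)
            _ = Real.exp (-φ s) * (s+1)^n * CT := by ring
  -- the lower bound
  obtain ⟨x₀, hx₀L, hx₀K⟩ := hcontact
  have hLOW : ∀ t δ : ℝ, 0 < t → 0 < δ →
      ENNReal.ofReal (Real.exp (-φ (r*t + (2*r+1)*δ)) * ((δ/C)^n * vb))
        ≤ μ' ((t • K)ᶜ) := by
    intro t δ ht hδ
    set c := (t + 2*δ) • x₀ with hcdef
    set S := Metric.ball c (δ/C) with hSdef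
    have htδ : 0 < t + 2*δ := by linarith
    have hM0 : 0 ≤ r*t + (2*r+1)*δ := by nlinarith
    have hS1 : S ⊆ (t • K)ᶜ := by
      intro x hx
      simp only [mem_compl_iff]
      intro hxK
      have h1 : gauge K x ≤ t := memtK t ht.le x hxK
      have h2 : gauge K c ≤ gauge K x + gauge K (c - x) := by
        have := gauge_add_le hKconv habsK x (c - x)
        simpa using this
      have h3 : gauge K c = (t+2*δ) * gauge K x₀ := by
        rw [hcdef, gauge_smul_of_nonneg htδ.le, smul_eq_mul]
      have h5 : ‖c - x‖ < δ/C := by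
        rw [← dist_eq_norm, dist_comm]
        exact Metric.mem_ball.1 hx
      have h6 : gauge K (c - x) < δ := by
        have := hCK (c - x)
        have h7 : C * ‖c - x‖ < C * (δ/C) := mul_lt_mul_of_pos_left h5 hCpos
        rw [mul_div_cancel₀ _ hCpos.ne'] at h7
        linarith
      nlinarith [hx₀K]
    have hS2 : ∀ x ∈ S, gauge L x ≤ r*t + (2*r+1)*δ := by
      intro x hx
      have h2 : gauge L x ≤ gauge L c + gauge L (x - c) := by
        have := gauge_add_le hLconv habsL c (x - c)
        simpa using this
      have h3 : gauge L c = (t+2*δ) * gauge L x₀ := by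
        rw [hcdef, gauge_smul_of_nonneg htδ.le, smul_eq_mul]
      have h5 : ‖x - c‖ < δ/C := by
        rw [← dist_eq_norm]
        exact Metric.mem_ball.1 hx
      have h6 : gauge L (x - c) < δ := by
        have := hCL (x - c)
        have h7 : C * ‖x - c‖ < C * (δ/C) := mul_lt_mul_of_pos_left h5 hCpos
        rw [mul_div_cancel₀ _ hCpos.ne'] at h7
        linarith
      have h8 : (t+2*δ) * gauge L x₀ ≤ (t+2*δ) * r := mul_le_mul_of_nonneg_left hx₀L htδ.le
      nlinarith
    have hμS : ENNReal.ofReal (Real.exp (-φ (r*t + (2*r+1)*δ)) * ((δ/C)^n * vb)) ≤ μ' S := by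
      have h1 : μ' S = ∫⁻ x in S,
          ENNReal.ofReal (Real.exp (-φ (gauge L x))) ∂volume :=
        withDensity_apply _ Metric.isOpen_ball.measurableSet
      have h2 : ENNReal.ofReal (Real.exp (-φ (r*t + (2*r+1)*δ))) * volume S ≤ μ' S := by
        rw [h1, ← setLIntegral_const]
        apply setLIntegral_mono' Metric.isOpen_ball.measurableSet
        intro x hx
        apply ENNReal.ofReal_le_ofReal
        apply Real.exp_le_exp.2
        apply neg_le_neg
        exact hφmono (gauge_nonneg x) hM0 (hS2 x hx)
      have h3 : volume S = ENNReal.ofReal ((δ/C)^n) *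
          volume (Metric.ball (0:EuclideanSpace ℝ (Fin n)) 1) := by
        rw [hSdef, Measure.addHaar_ball_of_pos volume c (by positivity),
          finrank_euclideanSpace_fin]
      have h4 : volume (Metric.ball (0:EuclideanSpace ℝ (Fin n)) 1) = ENNReal.ofReal vb :=
        (ENNReal.ofReal_toReal measure_ball_lt_top.ne).symm
      calc ENNReal.ofReal (Real.exp (-φ (r*t + (2*r+1)*δ)) * ((δ/C)^n * vb))
          = ENNReal.ofReal (Real.exp (-φ (r*t + (2*r+1)*δ))) *
              (ENNReal.ofReal ((δ/C)^n) * ENNReal.ofReal vb) := by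
            rw [← ENNReal.ofReal_mul (by positivity), ← ENNReal.ofReal_mul (by positivity)]
        _ = ENNReal.ofReal (Real.exp (-φ (r*t + (2*r+1)*δ))) * volume S := by
            rw [h3, h4]
        _ ≤ μ' S := h2
    exact le_trans hμS (measure_mono hS1)
  -- complement is contained in a superlevel set
  have hcompl : ∀ t : ℝ, 0 < t →
      ((t • K)ᶜ : Set (EuclideanSpace ℝ (Fin n))) ⊆ {x | r * t ≤ gauge L x} := by
    intro t ht x hx
    by_contra hlt
    simp only [mem_setOf_eq, not_le] at hlt
    apply hx
    have h1 : x ∈ (r*t) • L := memL (r*t) (by positivity) x hlt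
    have h2 : (r*t) • L = t • (r • L) := by rw [mul_comm, mul_smul]
    rw [h2] at h1
    exact smul_set_mono hrLK h1
  -- thresholds
  have hTlarge : ∀ M : ℝ, ∀ᶠ t : ℝ in atTop, s₁ ≤ r*t ∧ 1 ≤ t ∧ M ≤ φ (r*t) := by
    intro M
    rw [eventually_atTop]
    refine ⟨max (max (s₁/r) 1) ((M + a*s₁)/(a*r)), fun t ht => ?_⟩
    have ht1 : s₁/r ≤ t := le_trans (le_trans (le_max_left _ _) (le_max_left _ _)) ht
    have ht2 : 1 ≤ t := le_trans (le_trans (le_max_right _ _) (le_max_left _ _)) ht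
    have ht3 : (M + a*s₁)/(a*r) ≤ t := le_trans (le_max_right _ _) ht
    have h1 : s₁ ≤ r*t := by
      rw [div_le_iff₀ hrpos] at ht1
      linarith [ht1]
    have h3 : M + a*s₁ ≤ a*r*t := by
      rw [div_le_iff₀ (by positivity)] at ht3
      linarith
    refine ⟨h1, ht2, ?_⟩
    have h4 := hlin (r*t) (by positivity)
    nlinarith
  -- the upper eventual estimate
  have hup : ∀ᶠ t : ℝ in atTop,
      Real.log (μ' ((t • K)ᶜ)).toReal / φ (r * t)
        ≤ -1 + ((n : ℝ) * Real.log (r*t+1) + Real.log CT) / φ (r*t) := by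
    filter_upwards [hTlarge 1] with t ⟨hst, h1t, hφ1⟩
    have ht0 : (0:ℝ) < t := lt_of_lt_of_le one_pos h1t
    have hφpos : 0 < φ (r*t) := lt_of_lt_of_le one_pos hφ1
    have hub0 : μ' ((t • K)ᶜ) ≤ ENNReal.ofReal (Real.exp (-φ (r*t)) * (r*t+1)^n * CT) :=
      le_trans (measure_mono (hcompl t ht0)) (hUB (r*t) hst)
    have hfin : μ' ((t • K)ᶜ) ≠ ⊤ := ne_top_of_le_ne_top ENNReal.ofReal_ne_top hub0
    have hposval : 0 < Real.exp (-φ (r*t + (2*r+1)*1)) * ((1/C)^n * vb) := by positivity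
    have hlow := hLOW t 1 ht0 one_pos
    have hμpos : 0 < (μ' ((t • K)ᶜ)).toReal := by
      apply ENNReal.toReal_pos _ hfin
      intro h0
      rw [h0] at hlow
      exact absurd (le_antisymm hlow zero_le) (ENNReal.ofReal_pos.2 hposval).ne'
    have htr : (μ' ((t • K)ᶜ)).toReal ≤ Real.exp (-φ (r*t)) * (r*t+1)^n * CT :=
      ENNReal.toReal_le_of_le_ofReal (by positivity) hub0
    have hlog : Real.log (μ' ((t • K)ᶜ)).toReal
        ≤ -φ (r*t) + ((n:ℝ) * Real.log (r*t+1) + Real.log CT) := by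
      have h2 := (Real.log_le_log_iff hμpos (by positivity)).2 htr
      rw [Real.log_mul (by positivity) hCTpos.ne',
        Real.log_mul (Real.exp_pos _).ne' (by positivity), Real.log_exp, Real.log_pow] at h2
      linarith
    have h3 := div_le_div_of_nonneg_right hlog hφpos.le
    have h4 : (-φ (r*t) + ((n:ℝ) * Real.log (r*t+1) + Real.log CT)) / φ (r*t)
        = -1 + ((n:ℝ) * Real.log (r*t+1) + Real.log CT) / φ (r*t) := by
      rw [add_div, neg_div, div_self hφpos.ne']
    rw [← h4]
    exact h3
  -- the correcting term tends to zero
  have hGtend : Tendsto (fun t : ℝ => ((n:ℝ) * Real.log (r*t+1) + Real.log CT) / φ (r*t))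
      atTop (𝓝 0) := by
    have htend : Tendsto (fun t : ℝ => r*t+1) atTop atTop :=
      tendsto_atTop_add_const_right _ 1 (Tendsto.const_mul_atTop hrpos tendsto_id)
    have h1 : (fun t : ℝ => Real.log (r*t+1)) =o[atTop] (fun t : ℝ => r*t+1) :=
      Real.isLittleO_log_id_atTop.comp_tendsto htend
    have h2 : (fun t : ℝ => r*t+1) =O[atTop] (fun t : ℝ => a*(r*t) - a*s₁) := by
      apply Asymptotics.IsBigO.of_bound (2/a)
      filter_upwards [eventually_ge_atTop ((2*s₁+1)/r)] with t ht
      have h3 : 2*s₁ + 1 ≤ r*t := by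
        rw [div_le_iff₀ hrpos] at ht; linarith
      have h4 : (0:ℝ) < r*t+1 := by linarith
      have h5 : (0:ℝ) < a*(r*t) - a*s₁ := by nlinarith
      rw [Real.norm_eq_abs, Real.norm_eq_abs, abs_of_pos h4, abs_of_pos h5]
      rw [div_mul_eq_mul_div, le_div_iff₀ ha]
      nlinarith
    have h6 : (fun t : ℝ => (n:ℝ) * Real.log (r*t+1)) =o[atTop]
        (fun t : ℝ => a*(r*t) - a*s₁) := (h1.trans_isBigO h2).const_mul_left _
    have h8 : Tendsto (fun t : ℝ => a*(r*t) - a*s₁) atTop atTop := by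
      have h8' : Tendsto (fun t : ℝ => a*(r*t)) atTop atTop :=
        Tendsto.const_mul_atTop ha (Tendsto.const_mul_atTop hrpos tendsto_id)
      simpa [sub_eq_add_neg] using tendsto_atTop_add_const_right _ (-(a*s₁)) h8'
    have h7 : (fun _ : ℝ => Real.log CT) =o[atTop] (fun t : ℝ => a*(r*t) - a*s₁) := by
      apply Asymptotics.isLittleO_const_left.2
      right
      simpa [Function.comp_def, Real.norm_eq_abs] using tendsto_abs_atTop_atTop.comp h8
    have hH : Tendsto (fun t : ℝ => ((n:ℝ) * Real.log (r*t+1) + Real.log CT) /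
        (a*(r*t) - a*s₁)) atTop (𝓝 0) := (h6.add h7).tendsto_div_nhds_zero
    apply squeeze_zero' ?_ ?_ hH
    · filter_upwards [hTlarge 1] with t ⟨hst, h1t, hφ1⟩
      have hl1 : 0 ≤ Real.log (r*t+1) := Real.log_nonneg (by linarith)
      have hl2 : 0 ≤ Real.log CT := Real.log_nonneg hCT1
      have hnum : 0 ≤ (n:ℝ) * Real.log (r*t+1) + Real.log CT :=
        add_nonneg (mul_nonneg (Nat.cast_nonneg n) hl1) hl2
      exact div_nonneg hnum (by linarith)
    · filter_upwards [hTlarge 1, eventually_ge_atTop ((2*s₁+1)/r)] with t ⟨hst, h1t, hφ1⟩ ht2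
      have h3 : 2*s₁ + 1 ≤ r*t := by
        rw [div_le_iff₀ hrpos] at ht2; linarith
      have hden : (0:ℝ) < a*(r*t) - a*s₁ := by nlinarith
      have hle : a*(r*t) - a*s₁ ≤ φ (r*t) := by
        have := hlin (r*t) (by nlinarith)
        linarith
      have hl1 : 0 ≤ Real.log (r*t+1) := Real.log_nonneg (by linarith)
      have hl2 : 0 ≤ Real.log CT := Real.log_nonneg hCT1
      have hnum : 0 ≤ (n:ℝ) * Real.log (r*t+1) + Real.log CT :=
        add_nonneg (mul_nonneg (Nat.cast_nonneg n) hl1) hl2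
      exact div_le_div_of_nonneg_left hnum hden hle
  have hupper : ∀ ε : ℝ, 0 < ε → ∀ᶠ t : ℝ in atTop,
      Real.log (μ' ((t • K)ᶜ)).toReal / φ (r * t) ≤ -1 + ε := by
    intro ε hε
    filter_upwards [hup, hGtend.eventually (eventually_le_nhds hε)] with t h1 h2
    exact le_trans h1 (by linarith)
  have hfreq0 : ∀ ε : ℝ, 0 < ε → ∃ᶠ t : ℝ in atTop,
      -1 - ((n:ℝ)+2)*ε ≤ Real.log (μ' ((t • K)ᶜ)).toReal / φ (r * t) := by
    intro ε hε
    rw [frequently_atTop]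
    intro b
    set T : ℝ := max (r*b) (((|Real.log vb - (n:ℝ)*Real.log C|+1)/ε + a*s₁)/a) with hTdef
    obtain ⟨s, hsT, hss₁, hgood⟩ := good_pts hφmono ha hs₁ hlin
      (show (0:ℝ) < 2*r+1 by linarith) hε T
    have hs0 : (0:ℝ) < s := lt_of_lt_of_le one_pos (le_trans hs₁ hss₁)
    have hφs : (|Real.log vb - (n:ℝ)*Real.log C|+1)/ε ≤ φ s := by
      have h1 : ((|Real.log vb - (n:ℝ)*Real.log C|+1)/ε + a*s₁)/a ≤ s :=
        le_trans (le_max_right _ _) hsT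
      rw [div_le_iff₀ ha] at h1
      have h2 := hlin s hs0.le
      nlinarith
    have hφspos : 0 < φ s := lt_of_lt_of_le (by positivity) hφs
    set t : ℝ := s / r with htdef
    have hrt : r * t = s := by rw [htdef, mul_comm, div_mul_cancel₀ _ hrpos.ne']
    have htb : b ≤ t := by
      have h1 : r*b ≤ s := le_trans (le_max_left _ _) hsT
      rw [htdef, le_div_iff₀ hrpos]
      linarith [mul_comm r b]
    have ht0 : 0 < t := by rw [htdef]; positivity
    refine ⟨t, htb, ?_⟩
    set δ : ℝ := Real.exp (-(ε * φ s)) with hδdef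
    have hδpos : 0 < δ := Real.exp_pos _
    have hub0 : μ' ((t • K)ᶜ) ≤ ENNReal.ofReal (Real.exp (-φ (r*t)) * (r*t+1)^n * CT) :=
      le_trans (measure_mono (hcompl t ht0)) (hUB (r*t) (by rw [hrt]; exact hss₁))
    have hfin : μ' ((t • K)ᶜ) ≠ ⊤ := ne_top_of_le_ne_top ENNReal.ofReal_ne_top hub0
    have hlow := hLOW t δ ht0 hδpos
    rw [hrt] at hlow
    have hargpos : 0 < Real.exp (-φ (s + (2*r+1)*δ)) * ((δ/C)^n * vb) := by positivity
    have htoReal : Real.exp (-φ (s + (2*r+1)*δ)) * ((δ/C)^n * vb)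
        ≤ (μ' ((t • K)ᶜ)).toReal := by
      have := ENNReal.toReal_mono hfin hlow
      rwa [ENNReal.toReal_ofReal hargpos.le] at this
    have hμpos : 0 < (μ' ((t • K)ᶜ)).toReal := lt_of_lt_of_le hargpos htoReal
    have hlog : -φ (s + (2*r+1)*δ) + ((n:ℝ) * Real.log (δ/C) + Real.log vb)
        ≤ Real.log (μ' ((t • K)ᶜ)).toReal := by
      have h2 := (Real.log_le_log_iff hargpos hμpos).2 htoReal
      rw [Real.log_mul (Real.exp_pos _).ne' (by positivity),
        Real.log_mul (by positivity) hvbpos.ne', Real.log_exp, Real.log_pow] at h2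
      linarith
    have hlogδ : Real.log (δ/C) = -(ε * φ s) - Real.log C := by
      rw [Real.log_div hδpos.ne' hCpos.ne', hδdef, Real.log_exp]
    have hnum : (-1 - ((n:ℝ)+2)*ε) * φ s ≤ Real.log (μ' ((t • K)ᶜ)).toReal := by
      rw [hlogδ] at hlog
      have hA : (n:ℝ) * (-(ε * φ s) - Real.log C)
          = -((n:ℝ)*(ε*φ s)) - ((n:ℝ)*Real.log C) := by ring
      rw [hA] at hlog
      have hB : (-1 - ((n:ℝ)+2)*ε) * φ s
          = -(φ s) - ((n:ℝ)*(ε*φ s)) - 2*(ε*φ s) := by ring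
      rw [hB]
      have h7 : -φ (s + (2*r+1)*δ) ≥ -((1+ε) * φ s) := neg_le_neg hgood
      have h8 : (1+ε) * φ s = φ s + ε * φ s := by ring
      have h5 : |Real.log vb - (n:ℝ)*Real.log C| + 1 ≤ ε * φ s := by
        rw [div_le_iff₀ hε] at hφs
        linarith [mul_comm ε (φ s), hφs]
      have h4 := neg_abs_le (Real.log vb - (n:ℝ)*Real.log C)
      linarith
    have h6 : (-1 - ((n:ℝ)+2)*ε) ≤ Real.log (μ' ((t • K)ᶜ)).toReal / φ s := by
      rw [le_div_iff₀ hφspos]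
      exact hnum
    rw [hrt]
    exact h6
  apply limsup_eq_neg_one_of hupper
  intro ε hε
  have hε' : 0 < ε / ((n:ℝ)+2) := by positivity
  refine (hfreq0 _ hε').mono fun t ht => ?_
  have heq : ((n:ℝ)+2) * (ε/((n:ℝ)+2)) = ε := mul_div_cancel₀ _ (by positivity)
  calc -1 - ε = -1 - ((n:ℝ)+2)*(ε/((n:ℝ)+2)) := by rw [heq]
    _ ≤ _ := ht
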